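/- Assume the standing assumptions. For every λ ∈ ℂ with λ ∉ {a, −a, b, −b}: λ belongs to the continuous spectrum of U if and only if λ ≠ 0 and φ_{a,b}(λ) belongs to the continuous spectrum of T. Equivalently, σ_c(U) \ {a, −a, b, −b} = φ_{a,b}⁻¹( σ_c(T) \ {1, −1} ). -/

import Mathlib

open ContinuousLinearMap

/-- `λ` belongs to the continuous spectrum of `A`: `A − λ` is injective, has dense
range, but is not surjective. -/
def ContSpec {E : Type*} [NormedAddCommGroup E] [NormedSpace ℂ E]
    (A : E →L[ℂ] E) (lam : ℂ) : Prop :=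
  Function.Injective ⇑(A - lam • (1 : E →L[ℂ] E)) ∧
  DenseRange ⇑(A - lam • (1 : E →L[ℂ] E)) ∧
  ¬ Function.Surjective ⇑(A - lam • (1 : E →L[ℂ] E))

noncomputable section
set_option linter.unusedSectionVars false
namespace Stmt16Aux

variable {H K : Type*}
  [NormedAddCommGroup H] [InnerProductSpace ℂ H] [CompleteSpace H]
  [NormedAddCommGroup K] [InnerProductSpace ℂ K] [CompleteSpace K]

section transfer

variable (a b : ℝ) (d : H →L[ℂ] K) (S : H →L[ℂ] H) (U : H →L[ℂ] H) (T : K →L[ℂ] K)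
variable (hdd : ∀ y, d (adjoint d y) = y)
variable (hSS : ∀ x, S (S x) = x)
variable (hUx : ∀ x, U x = ((a:ℂ) - b) • S (adjoint d (d x)) + (b:ℂ) • S x)
variable (hTy : ∀ y, T y = d (S (adjoint d y)))

include hdd hSS hUx hTy

-- d(U x)
lemma dU (x : H) : d (U x) = ((a:ℂ)-b) • T (d x) + (b:ℂ) • d (S x) := by
  rw [hUx, map_add, map_smul, map_smul, hTy]

-- S(U x)
lemma SU (x : H) : S (U x) = ((a:ℂ)-b) • adjoint d (d x) + (b:ℂ) • x := by
  rw [hUx, map_add, map_smul, map_smul, hSS, hSS]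

-- d(U (U x))
lemma dUU (x : H) : d (U (U x)) = ((a:ℂ)-b) • T (d (U x)) + ((a:ℂ)*b) • d x := by
  rw [dU a b d S U T hdd hSS hUx hTy (U x)]
  rw [SU a b d S U T hdd hSS hUx hTy x]
  rw [map_add, map_smul, map_smul, hdd]
  module

-- U(d* y)
lemma Uds (y : K) : U (adjoint d y) = (a:ℂ) • S (adjoint d y) := by
  rw [hUx, hdd]; module

-- U(S(d* y))
lemma USds (y : K) : U (S (adjoint d y)) = ((a:ℂ)-b) • S (adjoint d (T y)) + (b:ℂ) • adjoint d y := by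
  rw [hUx, hSS, hTy]

lemma eig_U_T {lam mu : ℂ} (hab : (a:ℂ) - b ≠ 0) (hlam0 : lam ≠ 0)
    (hlb : lam^2 ≠ (b:ℂ)^2)
    (hmu : ((a:ℂ)-b) * lam * mu = lam^2 - (a:ℂ)*b)
    {x : H} (hx : x ≠ 0) (hxe : U x = lam • x) :
    d x ≠ 0 ∧ T (d x) = mu • d x := by
  have hdx : d x ≠ 0 := by
    intro h0
    have h1 : lam • x = (b:ℂ) • S x := by
      rw [← hxe, hUx, h0]; simp
    have h2 : lam • S x = (b:ℂ) • x := by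
      have := congrArg S h1
      rwa [map_smul, map_smul, hSS] at this
    have h4 : (lam * lam) • x = ((b:ℂ) * b) • x := by
      have : lam • (lam • x) = lam • ((b:ℂ) • S x) := by rw [h1]
      rw [smul_comm lam (b:ℂ) (S x), h2] at this
      rwa [smul_smul, smul_smul] at this
    have h3 : (lam^2 - (b:ℂ)^2) • x = 0 := by
      rw [sub_smul, pow_two, pow_two, h4, sub_self]
    rcases smul_eq_zero.mp h3 with h | h
    · exact hlb (by linear_combination h)
    · exact hx h
  refine ⟨hdx, ?_⟩
  have h4 : d (U (U x)) = (lam^2) • d x := by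
    rw [hxe, map_smul, hxe, map_smul, map_smul, smul_smul, ← pow_two]
  have h5 := dUU a b d S U T hdd hSS hUx hTy x
  rw [h4, hxe, map_smul, map_smul, smul_smul] at h5
  -- h5 : lam^2 • d x = ((a-b)) • (lam • T (d x))? careful
  have key : (((a:ℂ)-b) * lam) • T (d x) = (lam^2 - (a:ℂ)*b) • d x := by
    rw [sub_smul]
    rw [h5]
    module
  have : T (d x) = ((((a:ℂ)-b) * lam)⁻¹ * (lam^2 - (a:ℂ)*b)) • d x := by
    rw [← smul_smul, ← key, smul_smul, inv_mul_cancel₀ (mul_ne_zero hab hlam0), one_smul]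
  rw [this]
  congr 1
  field_simp
  linear_combination -hmu

lemma eig_T_U {lam mu : ℂ} (ha : (a:ℂ) ≠ 0) (hlam0 : lam ≠ 0)
    (hlb : lam^2 ≠ (b:ℂ)^2)
    (hmu : ((a:ℂ)-b) * lam * mu = lam^2 - (a:ℂ)*b)
    {y : K} (hy : y ≠ 0) (hye : T y = mu • y) :
    ∃ x : H, x ≠ 0 ∧ U x = lam • x := by
  set w := adjoint d y with hw
  have hw0 : w ≠ 0 := by
    intro h; apply hy; rw [← hdd y, ← hw, h, map_zero]
  set x₀ : H := ((a:ℂ)*lam) • S w + ((a:ℂ)*(b:ℂ)) • w with hx₀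
  have hUx₀ : U x₀ = lam • x₀ := by
    have e1 : U x₀ = ((a:ℂ)*lam) • U (S w) + ((a:ℂ)*(b:ℂ)) • U w := by
      rw [hx₀, map_add, map_smul, map_smul]
    rw [e1, USds a b d S U T hdd hSS hUx hTy y, Uds a b d S U T hdd hSS hUx hTy y, hye,
      map_smul (adjoint d), map_smul S, hx₀]
    match_scalars
    · linear_combination (a:ℂ) * hmu
    · ring
  by_cases hx0 : x₀ = 0
  · exfalso
    have e2 : ((a:ℂ)*lam) • S w = (-((a:ℂ)*(b:ℂ))) • w := by
      rw [neg_smul, eq_neg_iff_add_eq_zero]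
      rw [hx₀] at hx0
      exact hx0
    have e3 : ((a:ℂ)*lam) • w = (-((a:ℂ)*(b:ℂ))) • S w := by
      have := congrArg S e2
      rwa [map_smul, map_smul, hSS] at this
    have e4 : (((a:ℂ)*lam)*((a:ℂ)*lam)) • w = ((-((a:ℂ)*(b:ℂ)))*(-((a:ℂ)*(b:ℂ)))) • w := by
      calc (((a:ℂ)*lam)*((a:ℂ)*lam)) • w = ((a:ℂ)*lam) • (((a:ℂ)*lam) • w) := by rw [smul_smul]
        _ = ((a:ℂ)*lam) • ((-((a:ℂ)*(b:ℂ))) • S w) := by rw [e3]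
        _ = (-((a:ℂ)*(b:ℂ))) • (((a:ℂ)*lam) • S w) := smul_comm _ _ _
        _ = (-((a:ℂ)*(b:ℂ))) • ((-((a:ℂ)*(b:ℂ))) • w) := by rw [e2]
        _ = ((-((a:ℂ)*(b:ℂ)))*(-((a:ℂ)*(b:ℂ)))) • w := by rw [smul_smul]
    have e5 : ((((a:ℂ)*lam)*((a:ℂ)*lam)) - ((-((a:ℂ)*(b:ℂ)))*(-((a:ℂ)*(b:ℂ))))) • w = 0 := by
      rw [sub_smul, e4, sub_self]
    rcases smul_eq_zero.mp e5 with h | h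
    · have h6 := sub_eq_zero.mp h
      apply hlb
      have h7 : ((a:ℂ)*a) * lam^2 = ((a:ℂ)*a) * (b:ℂ)^2 := by ring_nf; ring_nf at h6; linear_combination h6
      exact mul_left_cancel₀ (mul_ne_zero ha ha) h7
    · exact hw0 h
  · exact ⟨x₀, hx0, hUx₀⟩

lemma UU (x : H) : U (U x) = ((a:ℂ)-b) • S (adjoint d (d (U x)))
    + ((b:ℂ)*((a:ℂ)-b)) • adjoint d (d x) + ((b:ℂ)*b) • x := by
  rw [hUx (U x), SU a b d S U T hdd hSS hUx hTy x]
  module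

lemma surjA {lam mu : ℂ} (hab : (a:ℂ) - b ≠ 0) (hlam0 : lam ≠ 0)
    (hlb2 : (b:ℂ)^2 - lam^2 ≠ 0)
    (hmu : ((a:ℂ)-b) * lam * mu = lam^2 - (a:ℂ)*b)
    (W : K →L[ℂ] K) (hW : ∀ g, T (W g) - mu • W g = g) :
    ∀ z : H, ∃ x : H, U x - lam • x = z := by
  intro z
  set g : K := lam • d (U z) + ((a:ℂ)*(b:ℂ)) • d z with hg
  have hWg : T (W g) = g + mu • W g := by
    have h := hW g
    rw [sub_eq_iff_eq_add] at h
    rw [h]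
  have hEq : U (lam^3 • z + lam^2 • U z
      + adjoint d ((-(b:ℂ)) • W g + (lam*((a:ℂ)-(b:ℂ))*(b:ℂ)) • d z)
      + S (adjoint d ((-lam) • W g)))
      - lam • (lam^3 • z + lam^2 • U z
      + adjoint d ((-(b:ℂ)) • W g + (lam*((a:ℂ)-(b:ℂ))*(b:ℂ)) • d z)
      + S (adjoint d ((-lam) • W g)))
      = (lam^2*((b:ℂ)^2-lam^2)) • z := by
    simp only [map_add, map_smul]
    rw [UU a b d S U T hdd hSS hUx hTy z,
      Uds a b d S U T hdd hSS hUx hTy (W g),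
      Uds a b d S U T hdd hSS hUx hTy (d z),
      USds a b d S U T hdd hSS hUx hTy (W g),
      hWg]
    rw [hg]
    simp only [map_add, map_smul]
    match_scalars
    all_goals try ring
    all_goals try linear_combination (-lam) * hmu
    all_goals try linear_combination (-(a:ℂ)*(b:ℂ)) * hmu
  all_goals try linear_combination ((lam^2-(b:ℂ)^2)*((a:ℂ)-(b:ℂ))^2) * hmu
  all_goals try linear_combination (-(lam^2-(b:ℂ)^2)*((a:ℂ)-(b:ℂ))^2) * hmu
  refine ⟨(lam^2*((b:ℂ)^2-lam^2))⁻¹ • (lam^3 • z + lam^2 • U z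
      + adjoint d ((-(b:ℂ)) • W g + (lam*((a:ℂ)-(b:ℂ))*(b:ℂ)) • d z)
      + S (adjoint d ((-lam) • W g))), ?_⟩
  rw [map_smul, smul_comm lam ((lam^2*((b:ℂ)^2-lam^2))⁻¹), ← smul_sub, hEq, smul_smul,
    inv_mul_cancel₀ (mul_ne_zero (pow_ne_zero 2 hlam0) hlb2), one_smul]

lemma surjB {lam mu : ℂ} (hab : (a:ℂ) - b ≠ 0) (hlam0 : lam ≠ 0)
    (hlb2 : lam^2 - (b:ℂ)^2 ≠ 0)
    (hmu : ((a:ℂ)-b) * lam * mu = lam^2 - (a:ℂ)*b)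
    (hUsurj : ∀ z : H, ∃ x : H, U x - lam • x = z) :
    ∀ y : K, ∃ w : K, T w - mu • w = y := by
  intro y
  obtain ⟨x, hx⟩ := hUsurj (S (adjoint d y))
  have h1 : d (U x) - lam • d x = T y := by
    have h := congrArg d hx
    rwa [map_sub, map_smul, ← hTy] at h
  have hdx : d x = lam⁻¹ • (d (U x) - T y) := by
    have h1' : lam • d x = d (U x) - T y := by
      rw [← h1]; module
    have h := congrArg (fun t => lam⁻¹ • t) h1'
    simpa [smul_smul, inv_mul_cancel₀ hlam0] using h
  have h2 : d (U (U x)) - lam • d (U x) = d (U (S (adjoint d y))) := by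
    have h := congrArg (fun t => d (U t)) hx
    simpa [map_sub, map_smul] using h
  rw [dUU a b d S U T hdd hSS hUx hTy x] at h2
  have h3 : d (U (S (adjoint d y))) = ((a:ℂ)-b) • T (T y) + (b:ℂ) • y := by
    rw [USds a b d S U T hdd hSS hUx hTy y, map_add, map_smul, map_smul, hdd, ← hTy]
  rw [h3, hdx] at h2
  have e : ((a:ℂ)-b) • T (d (U x)) = ((a:ℂ)-b) • T (T y) + (b:ℂ) • y
      + lam • d (U x) - ((a:ℂ)*(b:ℂ)) • (lam⁻¹ • (d (U x) - T y)) := by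
    linear_combination (norm := module) h2
  have hTt : T (d (U x)) = ((a:ℂ)-b)⁻¹ • (((a:ℂ)-b) • T (T y) + (b:ℂ) • y
      + lam • d (U x) - ((a:ℂ)*(b:ℂ)) • (lam⁻¹ • (d (U x) - T y))) := by
    have h := congrArg (fun t => ((a:ℂ)-b)⁻¹ • t) e
    simpa [smul_smul, inv_mul_cancel₀ hab] using h
  refine ⟨(((a:ℂ)-(b:ℂ))/(lam^2-(b:ℂ)^2)) • (((a:ℂ)-(b:ℂ)) • d (U x)
      - ((a:ℂ)-(b:ℂ)) • T y - lam • y), ?_⟩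
  simp only [map_sub, map_smul]
  rw [hTt]
  match_scalars
  all_goals try (field_simp; try ring)
  all_goals try linear_combination hmu
  all_goals try linear_combination -hmu
  all_goals try linear_combination lam * hmu
  all_goals try linear_combination (-lam) * hmu
  all_goals try linear_combination ((a:ℂ)*(b:ℂ)) * hmu
  all_goals try linear_combination (-(a:ℂ)*(b:ℂ)) * hmu
  all_goals try linear_combination ((lam^2-(b:ℂ)^2)*((a:ℂ)-(b:ℂ))^2) * hmu
  all_goals try linear_combination (-(lam^2-(b:ℂ)^2)*((a:ℂ)-(b:ℂ))^2) * hmu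
  all_goals try linear_combination ((a:ℂ)-(b:ℂ)) * hmu
  all_goals linear_combination (-((a:ℂ)-(b:ℂ))) * hmu

end transfer

local notation "⟪" x ", " y "⟫" => @inner ℂ _ _ x y

lemma denseRange_iff_adjoint_ker (f : H →L[ℂ] H) :
    DenseRange ⇑f ↔ ∀ v, adjoint f v = 0 → v = 0 := by
  constructor
  · intro hd v hv
    have h0 : ∀ x : H, ⟪f x, v⟫ = (0:ℂ) := by
      intro x
      rw [← ContinuousLinearMap.adjoint_inner_right, hv, inner_zero_right]
    have h1 : ∀ w : H, ⟪w, v⟫ = (0:ℂ) := by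
      intro w
      have hc : Continuous fun w : H => ⟪w, v⟫ := continuous_id.inner continuous_const
      exact hd.induction_on w (isClosed_eq hc continuous_const) h0
    exact inner_self_eq_zero.mp (h1 v)
  · intro hker
    have horth : (LinearMap.range (f : H →ₗ[ℂ] H))ᗮ = ⊥ := by
      rw [Submodule.eq_bot_iff]
      intro v hv
      apply hker
      have h2 : ⟪f (adjoint f v), v⟫ = (0:ℂ) := hv _ ⟨_, rfl⟩
      rw [← ContinuousLinearMap.adjoint_inner_right] at h2
      exact inner_self_eq_zero.mp h2
    have hclosure : (LinearMap.range (f : H →ₗ[ℂ] H)).topologicalClosure = ⊤ :=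
      Submodule.topologicalClosure_eq_top_iff.mpr horth
    have : Dense ((LinearMap.range (f : H →ₗ[ℂ] H) : Submodule ℂ H) : Set H) :=
      Submodule.dense_iff_topologicalClosure_eq_top.mpr hclosure
    simpa [LinearMap.coe_range, DenseRange] using this


lemma contspec_inj_iff (A : H →L[ℂ] H) (lam : ℂ) :
    Function.Injective ⇑(A - lam • (1 : H →L[ℂ] H)) ↔ ∀ x, A x = lam • x → x = 0 := by
  rw [injective_iff_map_eq_zero]
  constructor
  · intro h x hx
    apply h
    simp only [ContinuousLinearMap.sub_apply, ContinuousLinearMap.smul_apply,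
      ContinuousLinearMap.one_apply, hx, sub_self]
  · intro h x hx
    apply h
    simp only [ContinuousLinearMap.sub_apply, ContinuousLinearMap.smul_apply,
      ContinuousLinearMap.one_apply] at hx
    rw [← sub_eq_zero]; exact hx

lemma contspec_surj_iff (A : H →L[ℂ] H) (lam : ℂ) :
    Function.Surjective ⇑(A - lam • (1 : H →L[ℂ] H)) ↔ ∀ z, ∃ x, A x - lam • x = z := by
  constructor <;> intro h z <;> obtain ⟨x, hx⟩ := h z <;> refine ⟨x, ?_⟩ <;>
    simpa only [ContinuousLinearMap.sub_apply, ContinuousLinearMap.smul_apply,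
      ContinuousLinearMap.one_apply] using hx

lemma contspec_dense_iff (A : H →L[ℂ] H) (lam : ℂ) :
    DenseRange ⇑(A - lam • (1 : H →L[ℂ] H)) ↔
      ∀ v, adjoint A v = (star lam) • v → v = 0 := by
  rw [denseRange_iff_adjoint_ker]
  have hadj : adjoint (A - lam • (1 : H →L[ℂ] H)) = adjoint A - (star lam) • 1 := by
    rw [← star_eq_adjoint, ← star_eq_adjoint, star_sub, star_smul, star_one]
  rw [hadj]
  constructor
  · intro h v hv
    apply h
    simp only [ContinuousLinearMap.sub_apply, ContinuousLinearMap.smul_apply,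
      ContinuousLinearMap.one_apply, hv, sub_self]
  · intro h v hv
    apply h
    simp only [ContinuousLinearMap.sub_apply, ContinuousLinearMap.smul_apply,
      ContinuousLinearMap.one_apply] at hv
    rw [← sub_eq_zero]; exact hv

end Stmt16Aux

end

set_option maxHeartbeats 2000000 in
open Stmt16Aux in
/-- Under the standing assumptions, for every `λ ∉ {a, −a, b, −b}`:
`λ ∈ σ_c(U)` iff `λ ≠ 0` and `φ_{a,b}(λ)` belongs to `σ_c(T)`. Equivalently,
`σ_c(U) \ {a, −a, b, −b} = φ_{a,b}⁻¹(σ_c(T) \ {1, −1})`. -/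
theorem stmt_16 {H K : Type*}
    [NormedAddCommGroup H] [InnerProductSpace ℂ H] [CompleteSpace H] [Nontrivial H]
    [NormedAddCommGroup K] [InnerProductSpace ℂ K] [CompleteSpace K] [Nontrivial K]
    (a b : ℝ)
    (d : H →L[ℂ] K) (hd : d ∘L (adjoint d) = 1)
    (S : H →L[ℂ] H) (hS : IsSelfAdjoint S) (hS2 : S ∘L S = 1)
    (C : H →L[ℂ] H)
    (hC : C = (a : ℂ) • ((adjoint d) ∘L d) + (b : ℂ) • (1 - (adjoint d) ∘L d))
    (U : H →L[ℂ] H) (hU : U = S ∘L C)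
    (T : K →L[ℂ] K) (hT : T = d ∘L S ∘L (adjoint d))
    (h1 : (adjoint d) ∘L d ≠ 1) (h2 : S ≠ 1) (h3 : S ≠ -1)
    (h4 : a ≠ b) (h5 : a ≠ -b) (h6 : a * b ≠ 0) :
    (∀ lam : ℂ, lam ∉ ({(a : ℂ), -(a : ℂ), (b : ℂ), -(b : ℂ)} : Set ℂ) →
      (ContSpec U lam ↔ lam ≠ 0 ∧
        ContSpec T ((lam - (a * b : ℝ) * lam⁻¹) / ((a : ℂ) - (b : ℝ))))) ∧
    {lam : ℂ | ContSpec U lam} \ {(a : ℂ), -(a : ℂ), (b : ℂ), -(b : ℂ)} =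
      {lam : ℂ | lam ≠ 0 ∧
        ((lam - (a * b : ℝ) * lam⁻¹) / ((a : ℂ) - (b : ℝ))) ∈
          {μ : ℂ | ContSpec T μ} \ {1, -1}} := by
  classical
  have haR : a ≠ 0 := left_ne_zero_of_mul h6
  have hbR : b ≠ 0 := right_ne_zero_of_mul h6
  have ha : (a:ℂ) ≠ 0 := Complex.ofReal_ne_zero.mpr haR
  have hb : (b:ℂ) ≠ 0 := Complex.ofReal_ne_zero.mpr hbR
  have hab : (a:ℂ) - (b:ℂ) ≠ 0 := sub_ne_zero.mpr (fun h => h4 (Complex.ofReal_inj.mp h))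
  -- pointwise operator facts
  have hdd : ∀ y : K, d (adjoint d y) = y := fun y => by
    simpa using DFunLike.congr_fun hd y
  have hSS : ∀ x : H, S (S x) = x := fun x => by
    simpa using DFunLike.congr_fun hS2 x
  have hUx : ∀ x : H, U x = ((a:ℂ) - b) • S (adjoint d (d x)) + (b:ℂ) • S x := by
    intro x
    rw [hU, hC]
    simp only [ContinuousLinearMap.comp_apply, ContinuousLinearMap.add_apply,
      ContinuousLinearMap.smul_apply, ContinuousLinearMap.sub_apply,
      ContinuousLinearMap.one_apply, map_add, map_smul, map_sub]
    module
  have hTy : ∀ y : K, T y = d (S (adjoint d y)) := fun y => by rw [hT]; rfl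
  -- U is surjective
  have hUsurjAll : Function.Surjective ⇑U := by
    intro z
    refine ⟨((b:ℂ))⁻¹ • S z + ((a:ℂ)⁻¹ - (b:ℂ)⁻¹) • adjoint d (d (S z)), ?_⟩
    rw [hUx]
    simp only [map_add, map_smul, hdd, hSS]
    match_scalars
    all_goals field_simp
    all_goals try ring
  -- adjoints
  have hS' : adjoint S = S := isSelfAdjoint_iff'.mp hS
  have hP : adjoint ((adjoint d) ∘L d) = (adjoint d) ∘L d := by
    rw [adjoint_comp, adjoint_adjoint]
  have hCsa : adjoint C = C := by
    rw [hC, ← star_eq_adjoint, star_add, star_smul, star_smul, star_sub, star_one,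
      star_eq_adjoint ((adjoint d) ∘L d), hP]
    simp [Complex.star_def, Complex.conj_ofReal]
  have hUadj : adjoint U = C ∘L S := by rw [hU, adjoint_comp, hCsa, hS']
  have hTsa : adjoint T = T := by
    rw [hT, adjoint_comp, adjoint_comp, adjoint_adjoint, hS', ContinuousLinearMap.comp_assoc]
  have hUadj_eig : ∀ (c : ℂ),
      (∃ v, v ≠ 0 ∧ adjoint U v = c • v) ↔ (∃ w, w ≠ 0 ∧ U w = c • w) := by
    intro c
    constructor
    · rintro ⟨v, hv0, hv⟩
      refine ⟨S v, fun h => hv0 (by rw [← hSS v, h, map_zero]), ?_⟩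
      have hUS : U (S v) = S (adjoint U v) := by
        rw [hUadj, hU]
        simp [ContinuousLinearMap.comp_apply]
      rw [hUS, hv, map_smul]
    · rintro ⟨w, hw0, hw⟩
      refine ⟨S w, fun h => hw0 (by rw [← hSS w, h, map_zero]), ?_⟩
      have h1 : adjoint U (S w) = C w := by
        rw [hUadj]
        simp [ContinuousLinearMap.comp_apply, hSS]
      have h3 : U w = S (C w) := by rw [hU]; rfl
      have h2 : S (C w) = c • w := by rw [← h3, hw]
      have h4 : C w = c • S w := by
        calc C w = S (S (C w)) := (hSS _).symm
          _ = S (c • w) := by rw [h2]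
          _ = c • S w := map_smul S c w
      rw [h1, h4]
  -- mu facts
  have hcast : ((a * b : ℝ) : ℂ) = (a:ℂ) * (b:ℂ) := by push_cast; ring
  have hmuF : ∀ lam : ℂ, lam ≠ 0 →
      ((a:ℂ)-b) * lam * ((lam - ((a * b : ℝ):ℂ) * lam⁻¹) / ((a : ℂ) - ((b:ℝ):ℂ)))
        = lam^2 - (a:ℂ)*b := by
    intro lam h0
    rw [hcast]
    field_simp
  have hmuconj : ∀ lam : ℂ, lam ≠ 0 →
      ((a:ℂ)-b) * (star lam) *
        (star ((lam - ((a * b : ℝ):ℂ) * lam⁻¹) / ((a : ℂ) - ((b:ℝ):ℂ))))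
        = (star lam)^2 - (a:ℂ)*b := by
    intro lam h0
    have hstar : (starRingEnd ℂ) ((lam - ((a * b : ℝ):ℂ) * lam⁻¹) / ((a : ℂ) - ((b:ℝ):ℂ)))
        = (((starRingEnd ℂ) lam) - ((a * b : ℝ):ℂ) * ((starRingEnd ℂ) lam)⁻¹)
          / ((a : ℂ) - ((b:ℝ):ℂ)) := by
      rw [map_div₀, map_sub, map_mul, map_inv₀, map_sub, Complex.conj_ofReal,
        Complex.conj_ofReal, Complex.conj_ofReal]
    have h2 := hmuF ((starRingEnd ℂ) lam) (star_ne_zero.mpr h0)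
    calc ((a:ℂ)-b) * (star lam) *
        (star ((lam - ((a * b : ℝ):ℂ) * lam⁻¹) / ((a : ℂ) - ((b:ℝ):ℂ))))
        = ((a:ℂ)-b) * ((starRingEnd ℂ) lam) *
          ((starRingEnd ℂ) ((lam - ((a * b : ℝ):ℂ) * lam⁻¹) / ((a : ℂ) - ((b:ℝ):ℂ)))) := by
          rw [starRingEnd_apply, starRingEnd_apply]
      _ = ((starRingEnd ℂ) lam)^2 - (a:ℂ)*b := by rw [hstar]; exact h2
      _ = (star lam)^2 - (a:ℂ)*b := by rw [starRingEnd_apply]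
  have main : ∀ lam : ℂ, lam ∉ ({(a : ℂ), -(a : ℂ), (b : ℂ), -(b : ℂ)} : Set ℂ) →
      (ContSpec U lam ↔ lam ≠ 0 ∧
        ContSpec T ((lam - (a * b : ℝ) * lam⁻¹) / ((a : ℂ) - (b : ℝ)))) := by
    intro lam hmem
    simp only [Set.mem_insert_iff, Set.mem_singleton_iff, not_or] at hmem
    obtain ⟨hla, hlna, hlb, hlnb⟩ := hmem
    have hlb2 : lam^2 - (b:ℂ)^2 ≠ 0 := by
      intro h
      rcases mul_eq_zero.mp
          (show (lam - (b:ℂ))*(lam + (b:ℂ)) = 0 by linear_combination h) with h' | h'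
      · exact hlb (by linear_combination h')
      · exact hlnb (by linear_combination h')
    have hlbne : lam^2 ≠ (b:ℂ)^2 := sub_ne_zero.mp hlb2
    have hlb2' : (b:ℂ)^2 - lam^2 ≠ 0 := fun h => hlb2 (by linear_combination -h)
    set mu : ℂ := (lam - (a * b : ℝ) * lam⁻¹) / ((a : ℂ) - (b : ℝ)) with hmudef
    constructor
    · rintro ⟨hinj, hdense, hnsurj⟩
      have hlam0 : lam ≠ 0 := by
        rintro rfl
        apply hnsurj
        have h0 : U - (0:ℂ) • (1 : H →L[ℂ] H) = U := by simp
        rw [h0]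
        exact hUsurjAll
      have hmu := hmuF lam hlam0
      have hmuc := hmuconj lam hlam0
      have hsc : star lam ≠ 0 := star_ne_zero.mpr hlam0
      have hscb : (star lam)^2 ≠ (b:ℂ)^2 := by
        intro h
        apply hlbne
        calc lam^2 = star ((star lam)^2) := by rw [star_pow, star_star]
          _ = star ((b:ℂ)^2) := by rw [h]
          _ = (b:ℂ)^2 := by rw [star_pow, Complex.star_def, Complex.conj_ofReal]
      have hUk : ∀ x : H, U x = lam • x → x = 0 := (contspec_inj_iff U lam).mp hinj
      have hUkc : ∀ v : H, U v = (star lam) • v → v = 0 := by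
        intro v hv
        by_contra hv0
        obtain ⟨w, hw0, hw⟩ := (hUadj_eig (star lam)).mpr ⟨v, hv0, hv⟩
        exact hw0 (((contspec_dense_iff U lam).mp hdense) w hw)
      refine ⟨hlam0, ?_, ?_, ?_⟩
      · rw [contspec_inj_iff]
        intro w hw
        by_contra hw0
        obtain ⟨x, hx0, hx⟩ :=
          eig_T_U a b d S U T hdd hSS hUx hTy ha hlam0 hlbne hmu hw0 hw
        exact hx0 (hUk x hx)
      · rw [contspec_dense_iff, hTsa]
        intro v hv
        by_contra hv0
        obtain ⟨x, hx0, hx⟩ :=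
          eig_T_U a b d S U T hdd hSS hUx hTy ha hsc hscb hmuc hv0 hv
        exact hx0 (hUkc x hx)
      · intro hsurj
        have hTinj : Function.Injective ⇑(T - mu • (1 : K →L[ℂ] K)) := by
          rw [contspec_inj_iff]
          intro w hw
          by_contra hw0
          obtain ⟨x, hx0, hx⟩ :=
            eig_T_U a b d S U T hdd hSS hUx hTy ha hlam0 hlbne hmu hw0 hw
          exact hx0 (hUk x hx)
        have hker : (T - mu • (1 : K →L[ℂ] K)).ker = ⊥ :=
          LinearMap.ker_eq_bot_of_injective hTinj
        have hrange : (T - mu • (1 : K →L[ℂ] K)).range = ⊤ :=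
          LinearMap.range_eq_top_of_surjective _ hsurj
        set e := ContinuousLinearEquiv.ofBijective (T - mu • (1 : K →L[ℂ] K)) hker hrange
          with he
        have hW : ∀ g : K, T ((e.symm : K →L[ℂ] K) g) - mu • (e.symm : K →L[ℂ] K) g = g := by
          intro g
          have h2 := e.apply_symm_apply g
          have h3 : e (e.symm g) = (T - mu • (1 : K →L[ℂ] K)) (e.symm g) := by
            rw [he]
            exact congrFun (ContinuousLinearEquiv.coeFn_ofBijective _ hker hrange) _
          rw [h3] at h2
          simpa [ContinuousLinearMap.sub_apply, ContinuousLinearMap.smul_apply,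
            ContinuousLinearMap.one_apply] using h2
        have hUsurj2 := surjA a b d S U T hdd hSS hUx hTy hab hlam0 hlb2' hmu
          ((e.symm : K →L[ℂ] K)) hW
        exact hnsurj ((contspec_surj_iff U lam).mpr hUsurj2)
    · rintro ⟨hlam0, hTinj, hTdense, hTnsurj⟩
      have hmu := hmuF lam hlam0
      have hmuc := hmuconj lam hlam0
      have hsc : star lam ≠ 0 := star_ne_zero.mpr hlam0
      have hscb : (star lam)^2 ≠ (b:ℂ)^2 := by
        intro h
        apply hlbne
        calc lam^2 = star ((star lam)^2) := by rw [star_pow, star_star]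
          _ = star ((b:ℂ)^2) := by rw [h]
          _ = (b:ℂ)^2 := by rw [star_pow, Complex.star_def, Complex.conj_ofReal]
      have hTk : ∀ w : K, T w = mu • w → w = 0 := (contspec_inj_iff T mu).mp hTinj
      have hTkc : ∀ v : K, T v = (star mu) • v → v = 0 := by
        have h := (contspec_dense_iff T mu).mp hTdense
        rw [hTsa] at h
        exact h
      refine ⟨?_, ?_, ?_⟩
      · rw [contspec_inj_iff]
        intro x hx
        by_contra hx0
        obtain ⟨hdx, hTdx⟩ :=
          eig_U_T a b d S U T hdd hSS hUx hTy hab hlam0 hlbne hmu hx0 hx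
        exact hdx (hTk _ hTdx)
      · rw [contspec_dense_iff]
        intro v hv
        by_contra hv0
        obtain ⟨w, hw0, hw⟩ := (hUadj_eig (star lam)).mp ⟨v, hv0, hv⟩
        obtain ⟨hdw, hTdw⟩ :=
          eig_U_T a b d S U T hdd hSS hUx hTy hab hsc hscb hmuc hw0 hw
        exact hdw (hTkc _ hTdw)
      · intro hsurj
        have hUsurj2 := (contspec_surj_iff U lam).mp hsurj
        have hTsurj := surjB a b d S U T hdd hSS hUx hTy hab hlam0 hlb2 hmu hUsurj2
        exact hTnsurj ((contspec_surj_iff T mu).mpr hTsurj)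
  refine ⟨main, ?_⟩
  ext lam
  simp only [Set.mem_diff, Set.mem_setOf_eq, Set.mem_insert_iff, Set.mem_singleton_iff,
    not_or]
  by_cases hmem : lam ∈ ({(a : ℂ), -(a : ℂ), (b : ℂ), -(b : ℂ)} : Set ℂ)
  · have hmem' := hmem
    simp only [Set.mem_insert_iff, Set.mem_singleton_iff] at hmem'
    constructor
    · rintro ⟨hcs, hne⟩
      exact absurd hmem' (by tauto)
    · rintro ⟨hl0, hTc, hmu1, hmun1⟩
      exfalso
      have hmu := hmuF lam hl0
      rcases hmem' with h | h | h | h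
      · apply hmu1
        rw [h] at hmu ⊢
        have h2 : ((a:ℂ)-b)*a*((((a:ℂ)) - (a * b : ℝ) * ((a:ℂ))⁻¹) / ((a : ℂ) - (b : ℝ)))
            = ((a:ℂ)-b)*a*1 := by linear_combination hmu
        exact mul_left_cancel₀ (mul_ne_zero hab ha) h2
      · apply hmun1
        rw [h] at hmu ⊢
        have h2 : ((a:ℂ)-b)*(-(a:ℂ))*(((-(a:ℂ)) - (a * b : ℝ) * (-(a:ℂ))⁻¹) / ((a : ℂ) - (b : ℝ)))
            = ((a:ℂ)-b)*(-(a:ℂ))*(-1) := by linear_combination hmu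
        exact mul_left_cancel₀ (mul_ne_zero hab (neg_ne_zero.mpr ha)) h2
      · apply hmun1
        rw [h] at hmu ⊢
        have h2 : ((a:ℂ)-b)*(b:ℂ)*((((b:ℂ)) - (a * b : ℝ) * ((b:ℂ))⁻¹) / ((a : ℂ) - (b : ℝ)))
            = ((a:ℂ)-b)*(b:ℂ)*(-1) := by linear_combination hmu
        exact mul_left_cancel₀ (mul_ne_zero hab hb) h2
      · apply hmu1
        rw [h] at hmu ⊢
        have h2 : ((a:ℂ)-b)*(-(b:ℂ))*(((-(b:ℂ)) - (a * b : ℝ) * (-(b:ℂ))⁻¹) / ((a : ℂ) - (b : ℝ)))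
            = ((a:ℂ)-b)*(-(b:ℂ))*1 := by linear_combination hmu
        exact mul_left_cancel₀ (mul_ne_zero hab (neg_ne_zero.mpr hb)) h2
  · have hne : lam ≠ (a:ℂ) ∧ lam ≠ -(a:ℂ) ∧ lam ≠ (b:ℂ) ∧ lam ≠ -(b:ℂ) := by
      simpa [Set.mem_insert_iff, Set.mem_singleton_iff, not_or] using hmem
    constructor
    · rintro ⟨hcs, -⟩
      obtain ⟨hl0, hTc⟩ := (main lam hmem).mp hcs
      have hmu := hmuF lam hl0
      refine ⟨hl0, hTc, ?_, ?_⟩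
      · intro h1
        rw [h1, mul_one] at hmu
        rcases mul_eq_zero.mp
            (show (lam - (a:ℂ))*(lam + (b:ℂ)) = 0 by linear_combination -hmu) with h | h
        · exact hne.1 (by linear_combination h)
        · exact hne.2.2.2 (by linear_combination h)
      · intro h1
        rw [h1] at hmu
        rcases mul_eq_zero.mp
            (show (lam + (a:ℂ))*(lam - (b:ℂ)) = 0 by linear_combination -hmu) with h | h
        · exact hne.2.1 (by linear_combination h)
        · exact hne.2.2.1 (by linear_combination h)
    · rintro ⟨hl0, hTc, -, -⟩
      exact ⟨(main lam hmem).mpr ⟨hl0, hTc⟩, hne.1, hne.2.1, hne.2.2.1, hne.2.2.2⟩
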